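/- Let p, q ≥ 0, N = p + q, J = diag(I_p, −I_q) ∈ M_N(ℂ), and let L ∈ M_N(ℂ) be pseudo-unitary with respect to J, i.e. L†·J·L = J (where L† is the conjugate transpose). Then the number of eigenvalues of L of modulus strictly greater than 1, counted with algebraic multiplicity (i.e. the number of roots z of the characteristic polynomial of L with |z| > 1, counted with multiplicity), is at most min(p,q). -/

import Mathlib

open Matrix Polynomial Module



lemma aux_matrix_charpoly_shift {K : Type*} [Field K] {n : Type*} [DecidableEq n] [Fintype n]
    (M : Matrix n n K) (t : K) :
    (M - t • 1).charpoly = M.charpoly.comp (X + C t) := by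
  have hmap : (charmatrix M).map (eval₂RingHom C (X + C t)) = charmatrix (M - t • 1) := by
    ext i j
    by_cases h : i = j
    · subst h
      simp only [Matrix.map_apply, charmatrix_apply_eq, Matrix.sub_apply, Matrix.smul_apply,
        Matrix.one_apply_eq, smul_eq_mul, mul_one]
      simp [eval₂_sub, map_sub, C_sub]
      ring
    · simp only [Matrix.map_apply, charmatrix_apply_ne _ _ _ h, Matrix.sub_apply,
        Matrix.smul_apply, Matrix.one_apply_ne h, smul_eq_mul, mul_zero, sub_zero]
      simp
  have := RingHom.map_det (eval₂RingHom C (X + C t)) (charmatrix M)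
  rw [Matrix.charpoly, Matrix.charpoly, ← hmap]
  rw [show (charmatrix M).map (eval₂RingHom C (X + C t))
      = (eval₂RingHom C (X + C t)).mapMatrix (charmatrix M) from rfl, ← this]
  rfl

lemma aux_end_charpoly_shift {K V : Type*} [Field K] [AddCommGroup V] [Module K V]
    [FiniteDimensional K V] (φ : Module.End K V) (t : K) :
    (φ - t • 1).charpoly = φ.charpoly.comp (X + C t) := by
  classical
  let b := Module.finBasis K V
  rw [← LinearMap.charpoly_toMatrix φ b, ← LinearMap.charpoly_toMatrix (φ - t • 1) b]
  rw [map_sub, _root_.map_smul, LinearMap.toMatrix_one]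
  exact aux_matrix_charpoly_shift _ t

lemma aux_finrank_maxGen {K V : Type*} [Field K] [AddCommGroup V] [Module K V]
    [FiniteDimensional K V] (φ : Module.End K V) (t : K) :
    finrank K (φ.maxGenEigenspace t) = φ.charpoly.rootMultiplicity t := by
  have h1 : φ.maxGenEigenspace t = (φ - t • 1).maxGenEigenspace 0 := by
    ext x
    simp [Module.End.mem_maxGenEigenspace, sub_zero]
  rw [h1, LinearMap.finrank_maxGenEigenspace_zero_eq, aux_end_charpoly_shift,
    Polynomial.rootMultiplicity_eq_natTrailingDegree]


lemma aux_finrank_finset_sup {K V : Type*} [Field K] [AddCommGroup V] [Module K V]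
    [FiniteDimensional K V] {ι : Type*} [DecidableEq ι] (s : Finset ι) (g : ι → Submodule K V)
    (h : s.SupIndep g) : finrank K ↥(s.sup g) = ∑ i ∈ s, finrank K ↥(g i) := by
  induction s using Finset.induction_on with
  | empty => simp
  | @insert a s ha ih =>
    have hd : Disjoint (g a) (s.sup g) :=
      h (Finset.subset_insert a s) (Finset.mem_insert_self a s) ha
    rw [Finset.sup_insert, Finset.sum_insert ha, ← ih (h.subset (Finset.subset_insert a s))]
    have := Submodule.finrank_sup_add_finrank_inf_eq (g a) (s.sup g)
    rw [disjoint_iff.mp hd] at this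
    simp only [finrank_bot, add_zero] at this
    omega


lemma aux_isotropic_pair {E : Type*} [AddCommGroup E] [Module ℂ E]
    (B : E → E → ℂ)
    (haddl : ∀ x x' y, B (x + x') y = B x y + B x' y)
    (hsmull : ∀ (c : ℂ) x y, B (c • x) y = (starRingEnd ℂ) c * B x y)
    (haddr : ∀ x y y', B x (y + y') = B x y + B x y')
    (hsmulr : ∀ (c : ℂ) x y, B x (c • y) = c * B x y)
    (f : Module.End ℂ E) (hf : ∀ x y, B (f x) (f y) = B x y)
    (lam mu : ℂ) (hne : (starRingEnd ℂ) lam * mu ≠ 1) :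
    ∀ (k a b : ℕ), a + b ≤ k → ∀ x y,
      ((f - lam • 1) ^ a) x = 0 → ((f - mu • 1) ^ b) y = 0 → B x y = 0 := by
  have hzl : ∀ y, B 0 y = 0 := by
    intro y
    have := hsmull 0 0 y
    simpa using this
  have hzr : ∀ x, B x 0 = 0 := by
    intro x
    have := hsmulr 0 x 0
    simpa using this
  intro k
  induction k with
  | zero =>
    intro a b hab x y hx hy
    have ha : a = 0 := by omega
    subst ha
    simp only [pow_zero, Module.End.one_apply] at hx
    rw [hx, hzl]
  | succ k ih =>
    intro a b hab x y hx hy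
    match a, b with
    | 0, b =>
      simp only [pow_zero, Module.End.one_apply] at hx
      rw [hx, hzl]
    | a, 0 =>
      simp only [pow_zero, Module.End.one_apply] at hy
      rw [hy, hzr]
    | a' + 1, b' + 1 =>
      set x' := (f - lam • 1) x with hx'def
      set y' := (f - mu • 1) y with hy'def
      have hx' : ((f - lam • 1) ^ a') x' = 0 := by
        rw [hx'def, ← Module.End.mul_apply, ← pow_succ]; exact hx
      have hy' : ((f - mu • 1) ^ b') y' = 0 := by
        rw [hy'def, ← Module.End.mul_apply, ← pow_succ]; exact hy
      have hfx : f x = lam • x + x' := by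
        rw [hx'def]; simp [LinearMap.sub_apply, LinearMap.smul_apply, Module.End.one_apply]
      have hfy : f y = mu • y + y' := by
        rw [hy'def]; simp [LinearMap.sub_apply, LinearMap.smul_apply, Module.End.one_apply]
      have key := hf x y
      rw [hfx, hfy] at key
      simp only [haddl, haddr, hsmull, hsmulr] at key
      have e1 : B x y' = 0 := ih (a' + 1) b' (by omega) x y' hx hy'
      have e2 : B x' y = 0 := ih a' (b' + 1) (by omega) x' y hx' hy
      have e3 : B x' y' = 0 := ih a' b' (by omega) x' y' hx' hy'
      rw [e1, e2, e3] at key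
      have : ((starRingEnd ℂ) lam * mu - 1) * B x y = 0 := by
        linear_combination key
      rcases mul_eq_zero.mp this with h | h
      · exact absurd (sub_eq_zero.mp h) hne
      · exact h


lemma aux_isotropic_finrank_le (p q : ℕ) (V : Submodule ℂ (Fin (p + q) → ℂ))
    (h : ∀ x ∈ V, star x ⬝ᵥ
      ((Matrix.diagonal (fun i : Fin (p + q) => if (i : ℕ) < p then (1 : ℂ) else -1)) *ᵥ x) = 0) :
    finrank ℂ V ≤ min p q := by
  set d : Fin (p + q) → ℂ := fun i => if (i : ℕ) < p then (1 : ℂ) else -1 with hd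
  have hBxx : ∀ x : Fin (p + q) → ℂ,
      star x ⬝ᵥ (Matrix.diagonal d *ᵥ x) = ∑ i, (starRingEnd ℂ) (x i) * (d i * x i) := by
    intro x
    simp [dotProduct, Matrix.mulVec_diagonal, Pi.star_apply, RCLike.star_def]
  -- first injection : to last q coordinates
  have hq : finrank ℂ V ≤ q := by
    let g : V →ₗ[ℂ] (Fin q → ℂ) := (LinearMap.funLeft ℂ ℂ (Fin.natAdd p)).comp V.subtype
    have hginj : Function.Injective g := by
      rw [← LinearMap.ker_eq_bot]
      rw [Submodule.eq_bot_iff]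
      rintro ⟨x, hxV⟩ hker
      have hcoords : ∀ i : Fin (p + q), ¬ (i : ℕ) < p → x i = 0 := by
        intro i hi
        have := congr_fun (LinearMap.mem_ker.mp hker) ⟨(i : ℕ) - p, by omega⟩
        simpa only [g, LinearMap.comp_apply, LinearMap.funLeft_apply, Submodule.subtype_apply, Pi.zero_apply,
          show Fin.natAdd p ⟨(i : ℕ) - p, by omega⟩ = i from Fin.ext (by simp; omega)] using this
      have h0 := h x hxV
      rw [hBxx] at h0
      have h0' : ∑ i : Fin (p + q), ((if (i : ℕ) < p then Complex.normSq (x i) else 0 : ℝ) : ℂ) = 0 := by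
        rw [← h0]
        refine Finset.sum_congr rfl fun i _ => ?_
        by_cases hip : (i : ℕ) < p
        · simp only [hd, hip, if_true, one_mul]
          rw [Complex.normSq_eq_conj_mul_self]
        · simp [hip, hcoords i hip]
      rw [← Complex.ofReal_sum, Complex.ofReal_eq_zero] at h0'
      have hz := (Finset.sum_eq_zero_iff_of_nonneg (fun i _ => by split_ifs <;> simp [Complex.normSq_nonneg])).mp h0'
      have : ∀ i : Fin (p + q), x i = 0 := by
        intro i
        by_cases hip : (i : ℕ) < p
        · have := hz i (Finset.mem_univ i)
          rw [if_pos hip] at this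
          exact Complex.normSq_eq_zero.mp this
        · exact hcoords i hip
      ext
      exact this _
    have := LinearMap.finrank_le_finrank_of_injective hginj
    simpa using this
  -- second injection : to first p coordinates
  have hp : finrank ℂ V ≤ p := by
    let g : V →ₗ[ℂ] (Fin p → ℂ) := (LinearMap.funLeft ℂ ℂ (Fin.castAdd q)).comp V.subtype
    have hginj : Function.Injective g := by
      rw [← LinearMap.ker_eq_bot]
      rw [Submodule.eq_bot_iff]
      rintro ⟨x, hxV⟩ hker
      have hcoords : ∀ i : Fin (p + q), (i : ℕ) < p → x i = 0 := by
        intro i hi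
        have := congr_fun (LinearMap.mem_ker.mp hker) ⟨(i : ℕ), hi⟩
        simpa only [g, LinearMap.comp_apply, LinearMap.funLeft_apply, Submodule.subtype_apply, Pi.zero_apply,
          show Fin.castAdd q ⟨(i : ℕ), hi⟩ = i from Fin.ext (by simp)] using this
      have h0 := h x hxV
      rw [hBxx] at h0
      have h0' : ∑ i : Fin (p + q), ((if (i : ℕ) < p then 0 else Complex.normSq (x i) : ℝ) : ℂ) = 0 := by
        rw [← neg_eq_zero, ← h0]
        rw [← Finset.sum_neg_distrib]
        refine Finset.sum_congr rfl fun i _ => ?_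
        by_cases hip : (i : ℕ) < p
        · simp [hip, hcoords i hip]
        · simp only [hd, hip, if_false, neg_mul, one_mul, mul_neg]
          simp [Complex.normSq_eq_conj_mul_self]
      rw [← Complex.ofReal_sum, Complex.ofReal_eq_zero] at h0'
      have hz := (Finset.sum_eq_zero_iff_of_nonneg (fun i _ => by split_ifs <;> simp [Complex.normSq_nonneg])).mp h0'
      have : ∀ i : Fin (p + q), x i = 0 := by
        intro i
        by_cases hip : (i : ℕ) < p
        · exact hcoords i hip
        · have := hz i (Finset.mem_univ i)
          rw [if_neg hip] at this
          exact Complex.normSq_eq_zero.mp this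
      ext
      exact this _
    have := LinearMap.finrank_le_finrank_of_injective hginj
    simpa using this
  omega


/-- If `L ∈ M_{p+q}(ℂ)` is pseudo-unitary with respect to `J = diag(I_p, −I_q)`
(`L†JL = J`), then the number of eigenvalues of `L` of modulus strictly greater than `1`,
counted with algebraic multiplicity, is at most `min p q`. -/
theorem statement14 (p q : ℕ) (L : Matrix (Fin (p + q)) (Fin (p + q)) ℂ)
    (hL : Lᴴ * Matrix.diagonal (fun i : Fin (p + q) => if (i : ℕ) < p then (1 : ℂ) else -1) * L
        = Matrix.diagonal (fun i : Fin (p + q) => if (i : ℕ) < p then (1 : ℂ) else -1)) :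
    (L.charpoly.roots.filter fun z => 1 < ‖z‖).card ≤ min p q := by
  classical
  set d : Fin (p + q) → ℂ := fun i => if (i : ℕ) < p then (1 : ℂ) else -1 with hd
  set f : Module.End ℂ (Fin (p + q) → ℂ) := Matrix.toLin' L with hfdef
  set B : (Fin (p + q) → ℂ) → (Fin (p + q) → ℂ) → ℂ :=
    fun x y => star x ⬝ᵥ (Matrix.diagonal d *ᵥ y) with hBdef
  -- sesquilinearity
  have haddl : ∀ x x' y, B (x + x') y = B x y + B x' y := by
    intro x x' y; simp [hBdef, star_add, add_dotProduct]
  have hsmull : ∀ (c : ℂ) x y, B (c • x) y = (starRingEnd ℂ) c * B x y := by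
    intro c x y
    simp [hBdef, star_smul, smul_dotProduct, RCLike.star_def, smul_eq_mul]
  have haddr : ∀ x y y', B x (y + y') = B x y + B x y' := by
    intro x y y'; simp [hBdef, mulVec_add, dotProduct_add]
  have hsmulr : ∀ (c : ℂ) x y, B x (c • y) = c * B x y := by
    intro c x y; simp [hBdef, mulVec_smul, dotProduct_smul, smul_eq_mul]
  -- invariance under f
  have hfapp : ∀ x, f x = L *ᵥ x := fun x => rfl
  have hf : ∀ x y, B (f x) (f y) = B x y := by
    intro x y
    rw [hBdef]
    simp only [hfapp]
    rw [star_mulVec, mulVec_mulVec, dotProduct_mulVec, vecMul_vecMul, ← Matrix.mul_assoc, hL,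
      dotProduct_mulVec]
  -- the set of large roots
  set s : Finset ℂ := L.charpoly.roots.toFinset.filter (fun z => 1 < ‖z‖) with hs
  have hsabs : ∀ z ∈ s, 1 < ‖z‖ := by
    intro z hz
    exact (Finset.mem_filter.mp hz).2
  -- counting
  have hcount : (L.charpoly.roots.filter fun z => 1 < ‖z‖).card
      = ∑ z ∈ s, L.charpoly.rootMultiplicity z := by
    rw [← Multiset.toFinset_sum_count_eq, Multiset.toFinset_filter]
    refine Finset.sum_congr rfl fun z hz => ?_
    rw [Multiset.count_filter_of_pos (p := fun z => 1 < ‖z‖) (Finset.mem_filter.mp hz).2,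
      Polynomial.count_roots]
  have hfc : f.charpoly = L.charpoly := by
    rw [← LinearMap.charpoly_toMatrix f (Pi.basisFun ℂ (Fin (p + q))),
      LinearMap.toMatrix_eq_toMatrix']
    rw [hfdef, LinearMap.toMatrix'_toLin']
  -- V
  set V : Submodule ℂ (Fin (p + q) → ℂ) := s.sup f.maxGenEigenspace with hV
  have hdim : ∑ z ∈ s, L.charpoly.rootMultiplicity z = finrank ℂ V := by
    rw [aux_finrank_finset_sup s f.maxGenEigenspace
      ((Module.End.independent_maxGenEigenspace f).supIndep' s)]
    refine (Finset.sum_congr rfl fun z _ => ?_).symm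
    rw [aux_finrank_maxGen, hfc]
  -- pairwise isotropy
  have hpair : ∀ lam ∈ s, ∀ mu ∈ s, ∀ x ∈ f.maxGenEigenspace lam, ∀ y ∈ f.maxGenEigenspace mu,
      B x y = 0 := by
    intro lam hlam mu hmu x hx y hy
    obtain ⟨a, ha⟩ := (Module.End.mem_maxGenEigenspace f lam x).mp hx
    obtain ⟨b, hb⟩ := (Module.End.mem_maxGenEigenspace f mu y).mp hy
    have hne : (starRingEnd ℂ) lam * mu ≠ 1 := by
      have h1 : 1 < ‖(starRingEnd ℂ) lam * mu‖ := by
        rw [norm_mul, Complex.norm_conj]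
        have := hsabs lam hlam
        have := hsabs mu hmu
        nlinarith
      intro hcontr
      rw [hcontr] at h1
      simp at h1
    exact aux_isotropic_pair B haddl hsmull haddr hsmulr f hf lam mu hne (a + b) a b le_rfl
      x y ha hb
  -- V is isotropic
  have hiso : ∀ x ∈ V, ∀ y ∈ V, B x y = 0 := by
    intro x hx y hy
    -- right-kernel submodule for fixed x'
    let Wr : (Fin (p + q) → ℂ) → Submodule ℂ (Fin (p + q) → ℂ) := fun x' =>
      { carrier := {y' | B x' y' = 0}
        add_mem' := fun h1 h2 => by simp only [Set.mem_setOf_eq] at *; rw [haddr, h1, h2, add_zero]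
        zero_mem' := by
          have := hsmulr 0 x' 0
          simpa using this
        smul_mem' := fun c y' h1 => by
          simp only [Set.mem_setOf_eq] at *
          rw [hsmulr, h1, mul_zero] }
    let Wl : (Fin (p + q) → ℂ) → Submodule ℂ (Fin (p + q) → ℂ) := fun y' =>
      { carrier := {x' | B x' y' = 0}
        add_mem' := fun h1 h2 => by simp only [Set.mem_setOf_eq] at *; rw [haddl, h1, h2, add_zero]
        zero_mem' := by
          have := hsmull 0 0 y'
          simpa using this
        smul_mem' := fun c x' h1 => by
          simp only [Set.mem_setOf_eq] at *
          rw [hsmull, h1, mul_zero] }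
    have main : V ≤ Wl y := by
      refine Finset.sup_le fun lam hlam x' hx' => ?_
      have hVr : V ≤ Wr x' := by
        refine Finset.sup_le fun mu hmu y' hy' => ?_
        exact hpair lam hlam mu hmu x' hx' y' hy'
      exact hVr hy
    exact main hx
  -- conclude
  rw [hcount, hdim]
  exact aux_isotropic_finrank_le p q V (fun x hx => hiso x hx x hx)
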